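/- arXiv:1404.0421 — 6 statements merged into one kernel-verified Lean document; each statement's English description precedes it below -/
import Mathlib

section
/- For the discrete interval I_a(k) with k ≥ n+1, the dimension on scale a with control na is exactly 1: there exist two a-disjoint na-uniformly bounded families covering I_a(k), but no single a-disjoint na-uniformly bounded family covers I_a(k). -/
open Metric Set Filter

noncomputable section

/-- Distance between two subsets of a metric space, valued in `ℝ≥0∞`
(it is `⊤` when one of the sets is empty, matching the convention `inf ∅ = ∞`). -/
def setEDist {X : Type*} [PseudoMetricSpace X] (A B : Set X) : ENNReal :=
  ⨅ a ∈ A, EMetric.infEdist a B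

/-- `diLE X lam D n` : the dimension of `X` on the scale `lam` with control `D`
does not exceed `n`, i.e. `X` is covered by `n+1` families of subsets, each family
`lam`-disjoint (distinct members at distance `> lam`) and `D`-uniformly bounded. -/
def diLE (X : Type*) [PseudoMetricSpace X] (lam D : ℝ) (n : ℕ) : Prop :=
  ∃ U : Fin (n + 1) → Set (Set X),
    (∀ i, ∀ A ∈ U i, ∀ B ∈ U i, A ≠ B → ENNReal.ofReal lam < setEDist A B) ∧
    (∀ i, ∀ A ∈ U i, EMetric.diam A ≤ ENNReal.ofReal D) ∧
    (∀ x : X, ∃ i, ∃ A ∈ U i, x ∈ A)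

/-- `lasStarLE X n` : the asymptotic dimension of `X` with linear control is at most `n`. -/
def lasStarLE (X : Type*) [PseudoMetricSpace X] (n : ℕ) : Prop :=
  ∃ c : ℝ, 0 < c ∧ ∀ R : ℝ, ∃ lam : ℝ, R < lam ∧ diLE X lam (c * lam) n

/-- `ANasLE X n` : the asymptotic Assouad–Nagata dimension of `X` is at most `n`. -/
def ANasLE (X : Type*) [PseudoMetricSpace X] (n : ℕ) : Prop :=
  ∃ c : ℝ, 0 < c ∧ ∃ r₀ : ℝ, ∀ lam : ℝ, r₀ < lam → diLE X lam (c * lam) n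

/-- for `k ≥ n+1`, `di_{(a, n·a)} I_a(k) = 1`. -/
theorem stmt1 (a : ℝ) (ha : 0 < a) (n k : ℕ) (hk : n + 1 ≤ k) :
    diLE ↥{x : ℝ | ∃ j : ℕ, j ≤ k ∧ x = (j : ℝ) * a} a ((n : ℝ) * a) 1 ∧
      ¬ diLE ↥{x : ℝ | ∃ j : ℕ, j ≤ k ∧ x = (j : ℝ) * a} a ((n : ℝ) * a) 0 := by
  set S : Set ℝ := {x : ℝ | ∃ j : ℕ, j ≤ k ∧ x = (j : ℝ) * a} with hSdef
  have hmem : ∀ j : ℕ, j ≤ k → ((j : ℝ) * a) ∈ S := fun j hj => ⟨j, hj, rfl⟩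
  -- edist between lattice points
  have hedist : ∀ (x y : ↥S) (j j' : ℕ), (x : ℝ) = (j : ℝ) * a → (y : ℝ) = (j' : ℝ) * a →
      edist x y = ENNReal.ofReal (|(j : ℝ) - (j' : ℝ)| * a) := by
    intro x y j j' hx hy
    rw [Subtype.edist_eq, edist_dist, Real.dist_eq, hx, hy]
    congr 1
    rw [← sub_mul, abs_mul, abs_of_pos ha]
  constructor
  · -- upper bound: two families of singletons, by parity
    refine ⟨fun i => {A | ∃ j : ℕ, j ≤ k ∧ j % 2 = (i : ℕ) ∧ A = {x : ↥S | (x : ℝ) = (j : ℝ) * a}},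
      ?_, ?_, ?_⟩
    · rintro i A ⟨j, hj, hji, rfl⟩ B ⟨j', hj', hj'i, rfl⟩ hne
      have hjj' : j ≠ j' := by rintro rfl; exact hne rfl
      have h2 : j + 2 ≤ j' ∨ j' + 2 ≤ j := by omega
      have habs : (2 : ℝ) ≤ |(j : ℝ) - (j' : ℝ)| := by
        rcases h2 with h | h
        · rw [abs_sub_comm]
          have : (j : ℝ) + 2 ≤ (j' : ℝ) := by exact_mod_cast h
          rw [abs_of_nonneg (by linarith)]; linarith
        · have : (j' : ℝ) + 2 ≤ (j : ℝ) := by exact_mod_cast h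
          rw [abs_of_nonneg (by linarith)]; linarith
      have hge : ENNReal.ofReal (2 * a) ≤
          setEDist {x : ↥S | (x : ℝ) = (j : ℝ) * a} {x : ↥S | (x : ℝ) = (j' : ℝ) * a} := by
        refine le_iInf₂ fun x hx => ?_
        refine le_iInf₂ fun y hy => ?_
        rw [hedist x y j j' hx hy]
        exact ENNReal.ofReal_le_ofReal (by nlinarith)
      refine lt_of_lt_of_le ?_ hge
      exact (ENNReal.ofReal_lt_ofReal_iff (by linarith)).2 (by linarith)
    · rintro i A ⟨j, hj, hji, rfl⟩
      refine le_trans (EMetric.diam_le fun x hx y hy => ?_) (zero_le)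
      have : x = y := Subtype.ext (hx.trans hy.symm)
      simp [this]
    · intro x
      obtain ⟨j, hj, hx⟩ := x.2
      exact ⟨⟨j % 2, by omega⟩, {y : ↥S | (y : ℝ) = (j : ℝ) * a}, ⟨j, hj, rfl, rfl⟩, hx⟩
  · -- lower bound
    rintro ⟨U, hdisj, hdiam, hcov⟩
    set p : ℕ → ↥S := fun j => ⟨((min j k : ℕ) : ℝ) * a, hmem _ (min_le_right _ _)⟩ with hp
    have hpval : ∀ j : ℕ, j ≤ k → (p j : ℝ) = (j : ℝ) * a := by
      intro j hj; simp [hp, min_eq_left hj, hj]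
    have hA : ∀ j : ℕ, ∃ B ∈ U 0, p j ∈ B := by
      intro j
      obtain ⟨i, B, hB, hpB⟩ := hcov (p j)
      exact ⟨B, by rwa [Subsingleton.elim (0 : Fin 1) i], hpB⟩
    choose A hAU hAp using hA
    have hstep : ∀ j : ℕ, j + 1 ≤ k → A j = A (j + 1) := by
      intro j hj
      by_contra hne
      have hlt := hdisj 0 _ (hAU j) _ (hAU (j + 1)) hne
      have hle : setEDist (A j) (A (j + 1)) ≤ ENNReal.ofReal a := by
        refine le_trans (iInf₂_le (p j) (hAp j)) ?_
        refine le_trans (EMetric.infEdist_le_edist_of_mem (hAp (j + 1))) ?_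
        rw [hedist (p j) (p (j + 1)) j (j + 1) (hpval j (by omega)) (hpval (j + 1) hj)]
        refine le_of_eq ?_
        congr 1
        push_cast
        rw [show (j : ℝ) - ((j : ℝ) + 1) = -1 by ring]
        simp
      exact absurd (lt_of_lt_of_le hlt hle) (lt_irrefl _)
    have hall : ∀ j : ℕ, j ≤ k → A 0 = A j := by
      intro j
      induction j with
      | zero => intro _; rfl
      | succ m ih => intro hm; exact (ih (by omega)).trans (hstep m hm)
    have h0 : p 0 ∈ A 0 := hAp 0
    have hkmem : p k ∈ A 0 := by rw [hall k le_rfl]; exact hAp k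
    have hd : edist (p 0) (p k) ≤ ENNReal.ofReal ((n : ℝ) * a) :=
      le_trans (EMetric.edist_le_diam_of_mem h0 hkmem) (hdiam 0 _ (hAU 0))
    rw [hedist (p 0) (p k) 0 k (hpval 0 (by omega)) (hpval k le_rfl)] at hd
    push_cast at hd
    have hd' : |(0 : ℝ) - (k : ℝ)| * a ≤ (n : ℝ) * a :=
      (ENNReal.ofReal_le_ofReal_iff (by positivity)).1 hd
    have hkr : (0 : ℝ) ≤ (k : ℝ) := by positivity
    rw [abs_sub_comm, abs_of_nonneg (by linarith)] at hd'
    have : (k : ℝ) ≤ (n : ℝ) := by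
      have := le_of_mul_le_mul_right (by linarith : (k : ℝ) * a ≤ (n : ℝ) * a) ha
      linarith
    have : k ≤ n := by exact_mod_cast this
    omega
end
end

section
/- Under conditions (I), (III), (IV) of the filtration construction, the asymptotic dimension with linear control of X is 0: there is c > 0 such that for every R there is λ > R with di_{(λ,cλ)} X ≤ 0. -/
open Metric Set Filter

noncomputable section

/-- under the filtration conditions (I), (III), (IV), `las_* X = 0`. -/
theorem stmt4 {X : Type*} [MetricSpace X] (Y : ℕ → Set X) (a : ℕ → ℝ)
    (hY0 : Y 0 = ∅) (hYmono : Monotone Y) (hcover : ⋃ n, Y n = Set.univ)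
    (hamono : Monotone a) (hatop : Tendsto a atTop atTop)
    (hI : ∀ n, 1 ≤ n → ∀ x ∈ Y n \ Y (n - 1), ∀ y ∈ Y n \ Y (n - 1),
      x ≠ y → a n ≤ dist x y)
    (hIII : ∀ n, 1 ≤ n → EMetric.diam (Y (n - 1)) < ENNReal.ofReal (a n))
    (hIV : ∀ n, 1 ≤ n → ∀ x ∈ Y (n - 1), ∀ z ∈ Y n \ Y (n - 1), a n ≤ dist x z) :
    lasStarLE X 0 := by
  classical
  refine ⟨1, one_pos, fun R => ?_⟩
  obtain ⟨n, hRn, hn1⟩ :=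
    ((hatop.eventually (eventually_gt_atTop R)).and (eventually_ge_atTop 1)).exists
  have hdiam := hIII n hn1
  have hdne : EMetric.diam (Y (n - 1)) ≠ ⊤ := ne_top_of_lt hdiam
  set D : ℝ := (EMetric.diam (Y (n - 1))).toReal with hD
  have hD0 : 0 ≤ D := ENNReal.toReal_nonneg
  have hDa : D < a n := by
    rw [hD, ← ENNReal.lt_ofReal_iff_toReal_lt hdne]; exact hdiam
  have ha0 : 0 < a n := lt_of_le_of_lt hD0 hDa
  set lam : ℝ := (max R D + a n) / 2 with hlam
  have hmax : max R D < a n := max_lt hRn hDa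
  have hRlam : R < lam := by
    have : max R D < lam := by rw [hlam]; linarith
    exact lt_of_le_of_lt (le_max_left R D) this
  have hlam_lt : lam < a n := by rw [hlam]; linarith
  have hDlam : D ≤ lam := by
    have : max R D < lam := by rw [hlam]; linarith
    exact le_of_lt (lt_of_le_of_lt (le_max_right R D) this)
  have hlam0 : 0 < lam := by
    have := le_max_right R D
    rw [hlam]; linarith
  -- minimal index
  have hidx : ∀ x : X, x ∉ Y (n - 1) → ∃ m, n ≤ m ∧ 1 ≤ m ∧ x ∈ Y m \ Y (m - 1) := by
    intro x hx
    have hex : ∃ k, x ∈ Y k := by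
      have := Set.mem_univ x
      rw [← hcover] at this
      exact Set.mem_iUnion.mp this
    set m := Nat.find hex with hm
    have hxm : x ∈ Y m := Nat.find_spec hex
    have hm1 : 1 ≤ m := by
      by_contra h
      push_neg at h
      interval_cases m
      · rw [hY0] at hxm; exact hxm
    have hxnot : x ∉ Y (m - 1) := Nat.find_min hex (Nat.sub_lt hm1 one_pos)
    have hnm : n ≤ m := by
      by_contra h
      push_neg at h
      exact hx (hYmono (Nat.le_sub_one_of_lt h) hxm)
    exact ⟨m, hnm, hm1, hxm, hxnot⟩
  -- separation
  have hsep : ∀ p q : X, q ∉ Y (n - 1) → p ≠ q → a n ≤ dist p q := by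
    intro p q hq hpq
    obtain ⟨mq, hnmq, hmq1, hqmem⟩ := hidx q hq
    by_cases hp : p ∈ Y (n - 1)
    · have hp' : p ∈ Y (mq - 1) := hYmono (Nat.sub_le_sub_right hnmq 1) hp
      exact le_trans (hamono hnmq) (hIV mq hmq1 p hp' q hqmem)
    · obtain ⟨mp, hnmp, hmp1, hpmem⟩ := hidx p hp
      rcases lt_trichotomy mp mq with h | h | h
      · have hp' : p ∈ Y (mq - 1) := hYmono (Nat.le_sub_one_of_lt h) hpmem.1
        exact le_trans (hamono hnmq) (hIV mq hmq1 p hp' q hqmem)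
      · subst h
        exact le_trans (hamono hnmq) (hI mp hmp1 p hpmem q hqmem hpq)
      · have hq' : q ∈ Y (mp - 1) := hYmono (Nat.le_sub_one_of_lt h) hqmem.1
        rw [dist_comm]
        exact le_trans (hamono hnmp) (hIV mp hmp1 q hq' p hpmem)
  have hbound : ∀ A B : Set X, (∀ p ∈ A, ∀ q ∈ B, a n ≤ dist p q) →
      ENNReal.ofReal (a n) ≤ setEDist A B := by
    intro A B h
    refine le_iInf₂ fun p hp => EMetric.le_infEdist.mpr fun q hq => ?_
    rw [edist_dist]
    exact ENNReal.ofReal_le_ofReal (h p hp q hq)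
  have hlamlt : ENNReal.ofReal lam < ENNReal.ofReal (a n) :=
    (ENNReal.ofReal_lt_ofReal_iff ha0).mpr hlam_lt
  refine ⟨lam, hRlam, ?_⟩
  refine ⟨fun _ => insert (Y (n - 1)) {A | ∃ x, x ∉ Y (n - 1) ∧ A = {x}}, ?_, ?_, ?_⟩
  · rintro i A hA B hB hAB
    refine lt_of_lt_of_le hlamlt (hbound A B ?_)
    simp only [Set.mem_insert_iff, Set.mem_setOf_eq] at hA hB
    rcases hA with rfl | ⟨x, hx, rfl⟩ <;> rcases hB with rfl | ⟨y, hy, rfl⟩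
    · exact absurd rfl hAB
    · intro p hp q hq
      rw [Set.mem_singleton_iff] at hq
      rw [hq]
      exact hsep p y hy (fun h => hy (h ▸ hp))
    · intro p hp q hq
      rw [Set.mem_singleton_iff] at hp
      rw [hp, dist_comm]
      exact hsep q x hx (fun h => hx (h ▸ hq))
    · intro p hp q hq
      rw [Set.mem_singleton_iff] at hp hq
      rw [hp, hq]
      exact hsep x y hy (fun h => hAB (by rw [h]))
  · intro i A hA
    simp only [Set.mem_insert_iff, Set.mem_setOf_eq] at hA
    rcases hA with rfl | ⟨x, hx, rfl⟩
    · rw [one_mul, ENNReal.le_ofReal_iff_toReal_le hdne (le_of_lt hlam0)]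
      exact hDlam
    · exact (EMetric.diam_singleton (x := x)).le.trans zero_le
  · intro x
    by_cases hx : x ∈ Y (n - 1)
    · exact ⟨0, Y (n - 1), Set.mem_insert _ _, hx⟩
    · exact ⟨0, {x}, Set.mem_insert_iff.mpr (Or.inr ⟨x, hx, rfl⟩), rfl⟩
end
end

section
/- Let G = ⊕_{i=1}^∞ ℤ_{p^i} with the metric d(x̄, ȳ) = Σ_i a_i |x_i − y_i|_{p^i}, where a_n is a monotone sequence of natural numbers tending to infinity. Then this metric is proper: every closed ball is finite (hence compact). -/
open Metric Set Filter

noncomputable section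

/-- The cyclic word norm on `ℤ/m`: `|z|_m = min(val z, m - val z)`. -/
def cycNorm (m : ℕ) (z : ZMod m) : ℕ := min z.val (m - z.val)

/-- The weighted `ℓ¹` metric on `G = ⊕_{i=1}^∞ ℤ_{p^i}`:
`d(x̄,ȳ) = Σ_i a_i |x_i - y_i|_{p^i}` (here the `i`-th factor, `i : ℕ`, is `ℤ_{p^{i+1}}`). -/
def Gdist (p : ℕ) (a : ℕ → ℕ) (x y : Π₀ i : ℕ, ZMod (p ^ (i + 1))) : ℝ :=
  ∑ i ∈ (x - y).support, (a i : ℝ) * (cycNorm (p ^ (i + 1)) ((x - y) i) : ℝ)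

/-- the weighted metric on `G = ⊕ ℤ_{pⁱ}` with monotone weights `aₙ → ∞`
is proper: every ball is finite. -/
theorem stmt9 (p : ℕ) (hp : p.Prime) (a : ℕ → ℕ) (hmono : Monotone a)
    (hatop : Tendsto (fun n => (a n : ℝ)) atTop atTop) (R : ℝ) (hR : 0 < R) :
    {x : Π₀ i : ℕ, ZMod (p ^ (i + 1)) | Gdist p a x 0 ≤ R}.Finite := by
  haveI : ∀ n : ℕ, NeZero (p ^ (n + 1)) := fun n => ⟨pow_ne_zero _ hp.ne_zero⟩
  obtain ⟨N, hN⟩ := (hatop.eventually_gt_atTop R).exists_forall_of_atTop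
  -- every element of the ball has support in range N
  have hsupp : ∀ x ∈ {x : Π₀ i : ℕ, ZMod (p ^ (i + 1)) | Gdist p a x 0 ≤ R},
      ∀ i ∈ x.support, i < N := by
    intro x hx i hi
    by_contra hiN
    push_neg at hiN
    have hxi : x i ≠ 0 := DFinsupp.mem_support_iff.mp hi
    have hcyc : (1 : ℝ) ≤ (cycNorm (p ^ (i + 1)) (x i) : ℝ) := by
      have h1 : 1 ≤ (x i).val := Nat.one_le_iff_ne_zero.mpr
        (fun h => hxi ((ZMod.val_eq_zero _).mp h))
      have h2 : 1 ≤ p ^ (i + 1) - (x i).val :=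
        by have := ZMod.val_lt (x i); omega
      exact_mod_cast le_min h1 h2
    have hterm : (a i : ℝ) ≤ (a i : ℝ) * (cycNorm (p ^ (i + 1)) (x i) : ℝ) :=
      le_mul_of_one_le_right (by positivity) hcyc
    have hle : (a i : ℝ) * (cycNorm (p ^ (i + 1)) (x i) : ℝ) ≤ Gdist p a x 0 := by
      unfold Gdist
      rw [sub_zero]
      exact Finset.single_le_sum (f := fun j => (a j : ℝ) * (cycNorm (p ^ (j + 1)) (x j) : ℝ))
        (fun j _ => by positivity) hi
    have : R < (a i : ℝ) := hN i hiN
    exact absurd hx (by simp only [Set.mem_setOf_eq]; push_neg; linarith)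
  -- inject into a finite product
  apply Set.Finite.of_finite_image (f := fun x (i : Fin N) => x i.1)
  · exact Set.toFinite _
  · intro x hx y hy hxy
    ext i
    by_cases hi : i < N
    · exact congrFun hxy ⟨i, hi⟩
    · have hx0 : x i = 0 := by
        by_contra h
        exact hi (hsupp x hx i (DFinsupp.mem_support_iff.mpr h))
      have hy0 : y i = 0 := by
        by_contra h
        exact hi (hsupp y hy i (DFinsupp.mem_support_iff.mpr h))
      rw [hx0, hy0]
end
end

section
/- Let G = ⊕_{i=1}^∞ ℤ_{p^i} with metric d(x̄,ȳ) = Σ a_i|x_i−y_i|_{p^i}, where the monotone sequence (a_n) of naturals satisfies a_n > 1 + diam(⊕_{i<n}(ℤ_{p^i}, a_i-scaled metric)) and p^n ≥ 2(n+1) for all n. Then las_* G = 0: for every R > 0 there is λ > R with di_{(λ, 2λ)} G ≤ 0. -/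
open Metric Set Filter

noncomputable section

lemma cycNorm_le_half (m : ℕ) [NeZero m] (z : ZMod m) : cycNorm m z ≤ m / 2 := by
  have := ZMod.val_lt z
  unfold cycNorm
  omega

lemma one_le_cycNorm (m : ℕ) [NeZero m] (z : ZMod m) (hz : z ≠ 0) : 1 ≤ cycNorm m z := by
  have h1 := ZMod.val_lt z
  have h2 : z.val ≠ 0 := fun h => hz ((ZMod.val_eq_zero z).mp h)
  unfold cycNorm
  omega

/-- `las_* G = 0`: for every `R > 0` there is `λ > R` with `di_{(λ,2λ)} G ≤ 0`. -/
theorem stmt11 (p : ℕ) (hp : p.Prime) (a : ℕ → ℕ) (hmono : Monotone a)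
    (ha : ∀ n : ℕ, 1 + ∑ i ∈ Finset.range n, a i * (p ^ (i + 1) / 2) < a n)
    (hpn : ∀ n : ℕ, 2 * (n + 2) ≤ p ^ (n + 1))
    (X : Type*) [MetricSpace X] (e : X ≃ (Π₀ i : ℕ, ZMod (p ^ (i + 1))))
    (he : ∀ x y : X, dist x y = Gdist p a (e x) (e y)) :
    ∀ R : ℝ, 0 < R → ∃ lam : ℝ, R < lam ∧ diLE X lam (2 * lam) 0 := by
  haveI : ∀ i : ℕ, NeZero (p ^ (i + 1)) := fun i => ⟨(pow_pos hp.pos _).ne'⟩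
  -- growth of a
  have key : ∀ m : ℕ, 2 * m + 2 ≤ a m := by
    intro m
    induction m with
    | zero => have := ha 0; simp at this; omega
    | succ k ih =>
      have h1 := ha (k + 1)
      have h2 : a k * (p ^ (k + 1) / 2) ≤
          ∑ i ∈ Finset.range (k + 1), a i * (p ^ (i + 1) / 2) :=
        Finset.single_le_sum (f := fun i => a i * (p ^ (i + 1) / 2))
          (fun i _ => Nat.zero_le _) (Finset.self_mem_range_succ k)
      have hp2 : 2 ≤ p ^ (k + 1) := le_trans (by omega) (hpn k)
      have hdiv : 1 ≤ p ^ (k + 1) / 2 := (Nat.one_le_div_iff (by norm_num)).mpr hp2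
      have : a k ≤ a k * (p ^ (k + 1) / 2) := Nat.le_mul_of_pos_right _ hdiv
      omega
  intro R hR
  set n : ℕ := ⌈R⌉₊ with hn
  set lam : ℝ := (a n : ℝ) - 1 with hlam
  have han : 2 * (n : ℝ) + 2 ≤ (a n : ℝ) := by exact_mod_cast key n
  have hRn : R ≤ (n : ℝ) := Nat.le_ceil R
  have hRlam : R < lam := by
    simp only [hlam]; nlinarith
  have hlampos : 0 < lam := lt_trans hR hRlam
  refine ⟨lam, hRlam, ?_⟩
  -- the cover by fibers of the projection to coordinates ≥ n
  set fib : X → Set X := fun u => {v : X | ∀ j : ℕ, n ≤ j → e v j = e u j} with hfib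
  refine ⟨fun _ => Set.range fib, ?_, ?_, ?_⟩
  · -- lam-disjointness
    rintro _ _ ⟨u, rfl⟩ _ ⟨w, rfl⟩ hAB
    have hrel : ¬ ∀ j : ℕ, n ≤ j → e u j = e w j := by
      intro hall
      apply hAB
      ext v
      constructor
      · intro hv j hj; rw [hv j hj, hall j hj]
      · intro hv j hj; rw [hv j hj, hall j hj]
    push_neg at hrel
    obtain ⟨j, hj, hne⟩ := hrel
    -- any two points of the two fibers are at distance ≥ a n
    have hdist : ∀ v ∈ fib u, ∀ v' ∈ fib w, (a n : ℝ) ≤ dist v v' := by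
      intro v hv v' hv'
      rw [he v v']
      have hvj : e v j = e u j := hv j hj
      have hv'j : e v' j = e w j := hv' j hj
      have hne' : (e v - e v') j ≠ 0 := by
        rw [DFinsupp.sub_apply, sub_ne_zero, hvj, hv'j]; exact hne
      have hmem : j ∈ (e v - e v').support := DFinsupp.mem_support_iff.mpr hne'
      have hterm : (a n : ℝ) ≤
          (a j : ℝ) * (cycNorm (p ^ (j + 1)) ((e v - e v') j) : ℝ) := by
        have h1 : (a n : ℝ) ≤ (a j : ℝ) := by exact_mod_cast hmono hj
        have h2 : (1 : ℝ) ≤ (cycNorm (p ^ (j + 1)) ((e v - e v') j) : ℝ) := by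
          exact_mod_cast one_le_cycNorm _ _ hne'
        nlinarith
      calc (a n : ℝ) ≤ (a j : ℝ) * (cycNorm (p ^ (j + 1)) ((e v - e v') j) : ℝ) := hterm
        _ ≤ Gdist p a (e v) (e v') :=
          Finset.single_le_sum (f := fun i =>
            (a i : ℝ) * (cycNorm (p ^ (i + 1)) ((e v - e v') i) : ℝ))
            (fun i _ => by positivity) hmem
    have hle : ENNReal.ofReal (a n) ≤ setEDist (fib u) (fib w) := by
      refine le_iInf fun v => le_iInf fun hv => ?_
      rw [EMetric.infEdist, Metric.le_infEDist]
      intro v' hv'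
      rw [edist_dist]
      exact ENNReal.ofReal_le_ofReal (hdist v hv v' hv')
    refine lt_of_lt_of_le ?_ hle
    rw [ENNReal.ofReal_lt_ofReal_iff (by
      have h0 : (0:ℝ) ≤ (n:ℝ) := Nat.cast_nonneg n; linarith)]
    simp only [hlam]; linarith
  · -- 2*lam-boundedness
    rintro _ _ ⟨u, rfl⟩
    rw [EMetric.diam, Metric.ediam_le_iff]
    intro v hv w hw
    rw [edist_dist]
    refine le_trans (ENNReal.ofReal_le_ofReal ?_) le_rfl
    rw [he v w]
    have hsub : (e v - e w).support ⊆ Finset.range n := by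
      intro i hi
      rw [Finset.mem_range]
      by_contra hni
      push_neg at hni
      have : (e v - e w) i = 0 := by
        rw [DFinsupp.sub_apply, sub_eq_zero, hv i hni, hw i hni]
      exact DFinsupp.mem_support_iff.mp hi this
    have hbd : Gdist p a (e v) (e w) ≤
        ((∑ i ∈ Finset.range n, a i * (p ^ (i + 1) / 2) : ℕ) : ℝ) := by
      push_cast
      refine le_trans (Finset.sum_le_sum_of_subset_of_nonneg hsub
        (fun i _ _ => by positivity)) ?_
      refine Finset.sum_le_sum fun i _ => ?_
      have h2 : (cycNorm (p ^ (i + 1)) ((e v - e w) i) : ℝ) ≤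
          ((p ^ (i + 1) / 2 : ℕ) : ℝ) := by
        exact_mod_cast cycNorm_le_half _ _
      have : (0 : ℝ) ≤ (a i : ℝ) := Nat.cast_nonneg _
      nlinarith
    have hsumlt : ((∑ i ∈ Finset.range n, a i * (p ^ (i + 1) / 2) : ℕ) : ℝ)
        ≤ (a n : ℝ) - 1 := by
      have := ha n
      have h' : (∑ i ∈ Finset.range n, a i * (p ^ (i + 1) / 2)) + 1 ≤ a n := by omega
      have := (Nat.cast_le (α := ℝ)).mpr h'
      push_cast at this ⊢
      linarith
    have : (a n : ℝ) - 1 ≤ 2 * lam := by simp only [hlam]; linarith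
    linarith
  · -- covering
    intro x
    exact ⟨0, fib x, ⟨x, rfl⟩, fun j _ => rfl⟩
end
end

section
/- Let X be a metric space, c > 0, and define f_c : ℕ → ℕ ∪ {∞} by f_c(λ) = di_{(λ,cλ)} X (the least n with di_{(λ,cλ)} X ≤ n, or ∞ if none). For a non-principal ultrafilter ω on ℕ, define las_ω X = min over c ∈ ℕ of lim_ω f_c. Then for every metric space X and every non-principal ultrafilter ω: las_* X ≤ las_ω X ≤ ANas X. -/
open Metric Set Filter

noncomputable section

/-- `fdim X c lam = di_{(lam, c·lam)} X ∈ ℕ ∪ {∞}`, the least `n` with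
`di_{(lam, c·lam)} X ≤ n`, or `∞` if there is none. -/
def fdim (X : Type*) [PseudoMetricSpace X] (c lam : ℕ) : ℕ∞ :=
  ⨅ n ∈ {n : ℕ | diLE X (lam : ℝ) ((c : ℝ) * (lam : ℝ)) n}, (n : ℕ∞)

/-- The ultralimit of `f : ℕ → ℕ ∪ {∞}` along the ultrafilter `ω`, in the one-point
compactification `ℕ ∪ {∞}`: the unique finite value attained `ω`-a.e., or `∞` if none. -/
def ulim (ω : Ultrafilter ℕ) (f : ℕ → ℕ∞) : ℕ∞ :=
  open scoped Classical in
  if h : ∃ v : ℕ, {m | f m = (v : ℕ∞)} ∈ ω then ((Classical.choose h : ℕ) : ℕ∞) else ⊤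

/-- `las_ω X`, the asymptotic dimension with linear control with respect to the
ultrafilter `ω` : the minimum over `c` of `lim_ω f_c`. -/
def lasOmega (X : Type*) [PseudoMetricSpace X] (ω : Ultrafilter ℕ) : ℕ∞ :=
  ⨅ c : ℕ, ulim ω (fun lam => fdim X c lam)

/-- The asymptotic dimension with linear control of `X` as a value in `ℕ ∪ {∞}`. -/
def lasStarDim (X : Type*) [PseudoMetricSpace X] : ℕ∞ :=
  ⨅ n ∈ {n : ℕ | lasStarLE X n}, (n : ℕ∞)

/-- The asymptotic Assouad–Nagata dimension of `X` as a value in `ℕ ∪ {∞}`. -/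
def ANasDim (X : Type*) [PseudoMetricSpace X] : ℕ∞ :=
  ⨅ n ∈ {n : ℕ | ANasLE X n}, (n : ℕ∞)

lemma diLE_mono_D {X : Type*} [PseudoMetricSpace X] {lam D D' : ℝ} {n : ℕ}
    (hD : D ≤ D') (h : diLE X lam D n) : diLE X lam D' n := by
  obtain ⟨U, h1, h2, h3⟩ := h
  exact ⟨U, h1, fun i A hA => (h2 i A hA).trans (ENNReal.ofReal_le_ofReal hD), h3⟩

lemma diLE_mono_n {X : Type*} [PseudoMetricSpace X] {lam D : ℝ} {n n' : ℕ}
    (hn : n ≤ n') (h : diLE X lam D n) : diLE X lam D n' := by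
  obtain ⟨U, h1, h2, h3⟩ := h
  refine ⟨fun i => if h : (i : ℕ) < n + 1 then U ⟨i, h⟩ else ∅, ?_, ?_, ?_⟩
  · intro i A hA B hB hAB
    by_cases hi : (i : ℕ) < n + 1
    · simp only [dif_pos hi] at hA hB; exact h1 _ A hA B hB hAB
    · simp only [dif_neg hi] at hA; exact absurd hA (Set.notMem_empty A)
  · intro i A hA
    by_cases hi : (i : ℕ) < n + 1
    · simp only [dif_pos hi] at hA; exact h2 _ A hA
    · simp only [dif_neg hi] at hA; exact absurd hA (Set.notMem_empty A)
  · intro x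
    obtain ⟨i, A, hA, hx⟩ := h3 x
    refine ⟨⟨(i : ℕ), by omega⟩, A, ?_, hx⟩
    simpa [dif_pos i.isLt, Fin.is_le i] using hA

lemma fdim_le {X : Type*} [PseudoMetricSpace X] {c lam n : ℕ}
    (h : diLE X (lam : ℝ) ((c : ℝ) * (lam : ℝ)) n) : fdim X c lam ≤ n :=
  iInf₂_le n h

lemma diLE_of_fdim_le {X : Type*} [PseudoMetricSpace X] {c lam n : ℕ}
    (h : fdim X c lam ≤ n) : diLE X (lam : ℝ) ((c : ℝ) * (lam : ℝ)) n := by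
  have hs : {k : ℕ | diLE X (lam : ℝ) ((c : ℝ) * (lam : ℝ)) k}.Nonempty := by
    by_contra hs
    rw [Set.not_nonempty_iff_eq_empty] at hs
    rw [fdim, hs] at h
    simp at h
  have hk : sInf {k : ℕ | diLE X (lam : ℝ) ((c : ℝ) * (lam : ℝ)) k} ∈
      {k : ℕ | diLE X (lam : ℝ) ((c : ℝ) * (lam : ℝ)) k} := Nat.sInf_mem hs
  have hle : ((sInf {k : ℕ | diLE X (lam : ℝ) ((c : ℝ) * (lam : ℝ)) k} : ℕ) : ℕ∞) ≤
      fdim X c lam := by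
    refine le_iInf₂ fun k hkmem => ?_
    exact_mod_cast Nat.sInf_le hkmem
  have : sInf {k : ℕ | diLE X (lam : ℝ) ((c : ℝ) * (lam : ℝ)) k} ≤ n := by
    exact_mod_cast hle.trans h
  exact diLE_mono_n this hk

lemma ulim_spec {ω : Ultrafilter ℕ} {f : ℕ → ℕ∞} (h : ulim ω f ≠ ⊤) :
    {m | f m = ulim ω f} ∈ ω := by
  by_cases h' : ∃ v : ℕ, {m | f m = (v : ℕ∞)} ∈ ω
  · rw [ulim, dif_pos h']
    exact Classical.choose_spec h'
  · exact absurd (by rw [ulim, dif_neg h']) h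

lemma ulim_le {ω : Ultrafilter ℕ} {f : ℕ → ℕ∞} {n : ℕ}
    (h : {m | f m ≤ (n : ℕ∞)} ∈ ω) : ulim ω f ≤ n := by
  have hsub : {m | f m ≤ (n : ℕ∞)} ⊆
      ⋃ k ∈ (Finset.range (n + 1) : Set ℕ), {m | f m = (k : ℕ∞)} := by
    intro m hm
    have hne : f m ≠ ⊤ := fun ht => by simp [ht] at hm
    set k := (f m).toNat with hkdef
    have hk : f m = (k : ℕ∞) := (ENat.coe_toNat hne).symm
    have hkn : k ≤ n := by
      simp only [Set.mem_setOf_eq, hk, Nat.cast_le] at hm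
      exact hm
    refine Set.mem_biUnion ?_ hk
    simp [Nat.lt_succ_iff, hkn]
  have hmem : (⋃ k ∈ (Finset.range (n + 1) : Set ℕ), {m | f m = (k : ℕ∞)}) ∈ ω :=
    ω.toFilter.mem_of_superset h hsub
  obtain ⟨k, hkmem, hkω⟩ :=
    (Ultrafilter.finite_biUnion_mem_iff (Finset.range (n + 1)).finite_toSet).mp hmem
  have hne : ulim ω f ≠ ⊤ := by
    intro ht
    rw [ulim] at ht
    split_ifs at ht with h'
    · exact (by simp at ht)
    · exact h' ⟨k, hkω⟩
  have hspec := ulim_spec hne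
  obtain ⟨m, hm1, hm2⟩ := Filter.nonempty_of_mem (ω.toFilter.inter_mem hspec hkω)
  have : ulim ω f = (k : ℕ∞) := hm1 ▸ hm2
  rw [this]
  exact_mod_cast Nat.lt_succ_iff.mp (by simpa using hkmem)

/-- for every metric space `X` and non-principal ultrafilter `ω`,
`las_* X ≤ las_ω X ≤ ANas X`. -/
theorem stmt13 (X : Type*) [MetricSpace X] (ω : Ultrafilter ℕ)
    (hω : (↑ω : Filter ℕ) ≤ Filter.cofinite) :
    lasStarDim X ≤ lasOmega X ω ∧ lasOmega X ω ≤ ANasDim X := by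
  constructor
  · rw [lasOmega]
    refine le_iInf fun c => ?_
    by_cases ht : ulim ω (fun lam => fdim X c lam) = ⊤
    · rw [ht]; exact le_top
    · obtain ⟨v, hv⟩ := WithTop.ne_top_iff_exists.mp ht
      rw [← hv]
      refine iInf₂_le v ?_
      have hS : {m | fdim X c m = (v : ℕ∞)} ∈ ω := by
        have := ulim_spec ht
        rwa [← hv] at this
      refine ⟨(c : ℝ) + 1, by positivity, fun R => ?_⟩
      have hSinf : {m | fdim X c m = (v : ℕ∞)}.Infinite := by
        intro hfin
        exact (Ultrafilter.compl_mem_iff_notMem.mp (hω hfin.compl_mem_cofinite)) hS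
      obtain ⟨m, hmS, hmgt⟩ := hSinf.exists_gt ⌈R⌉₊
      have hmR : R < (m : ℝ) := lt_of_le_of_lt (Nat.le_ceil R) (by exact_mod_cast hmgt)
      refine ⟨(m : ℝ), hmR, ?_⟩
      have hd : diLE X (m : ℝ) ((c : ℝ) * (m : ℝ)) v := diLE_of_fdim_le (le_of_eq hmS)
      exact diLE_mono_D (by nlinarith [Nat.cast_nonneg' (α := ℝ) m]) hd
  · rw [ANasDim]
    refine le_iInf fun n => le_iInf fun hn => ?_
    obtain ⟨c, hc, r₀, hr⟩ := hn
    refine (iInf_le _ ⌈c⌉₊).trans (ulim_le ?_)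
    set N := ⌈max r₀ 0⌉₊ with hN
    have hT : {m : ℕ | N < m} ∈ ω := by
      refine hω ?_
      rw [Filter.mem_cofinite]
      have : {m : ℕ | N < m}ᶜ = Set.Iic N := by
        ext m; simp [Nat.not_lt]
      rw [this]
      exact Set.finite_Iic N
    refine ω.toFilter.mem_of_superset hT fun m hm => ?_
    have hm' : r₀ < (m : ℝ) := by
      calc r₀ ≤ max r₀ 0 := le_max_left _ _
        _ ≤ (N : ℝ) := Nat.le_ceil _
        _ < (m : ℝ) := by exact_mod_cast hm
    have hd := hr (m : ℝ) hm'
    have hd' : diLE X (m : ℝ) ((⌈c⌉₊ : ℝ) * (m : ℝ)) n :=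
      diLE_mono_D (mul_le_mul_of_nonneg_right (Nat.le_ceil c) (Nat.cast_nonneg m)) hd
    exact fdim_le hd'
end
end

section
/- If sup over all non-principal ultrafilters ω of las_ω X equals k < ∞, then ANas X ≤ k. Hence ANas X = sup{las_ω X : ω ∈ ℕ*}. -/
open Metric Set Filter

noncomputable section

lemma diLE_mono {X : Type*} [PseudoMetricSpace X] {lam D lam' D' : ℝ} {n n' : ℕ}
    (h : diLE X lam D n) (hlam : lam' ≤ lam) (hD : D ≤ D') (hn : n ≤ n') :
    diLE X lam' D' n' := by
  obtain ⟨U, hsep, hdiam, hcov⟩ := h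
  refine ⟨fun i => if h : (i : ℕ) < n + 1 then U ⟨i, h⟩ else ∅, ?_, ?_, ?_⟩
  · intro i A hA B hB hAB
    dsimp only at hA hB
    split_ifs at hA hB with h
    · exact lt_of_le_of_lt (ENNReal.ofReal_le_ofReal hlam) (hsep _ A hA B hB hAB)
    · exact absurd hB (notMem_empty _)
  · intro i A hA
    dsimp only at hA
    split_ifs at hA with h
    · exact (hdiam _ A hA).trans (ENNReal.ofReal_le_ofReal hD)
    · exact absurd hA (notMem_empty _)
  · intro x
    obtain ⟨i, A, hA, hx⟩ := hcov x
    have hi : (i : ℕ) < n' + 1 := by omega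
    refine ⟨⟨i, hi⟩, A, ?_, hx⟩
    have h2 : ((⟨(i : ℕ), hi⟩ : Fin (n' + 1)) : ℕ) < n + 1 := i.2
    simp only [h2, dif_pos]
    simpa using hA

lemma fdim_le_iff {X : Type*} [PseudoMetricSpace X] {c lam k : ℕ} :
    fdim X c lam ≤ (k : ℕ∞) ↔ diLE X (lam : ℝ) ((c : ℝ) * lam) k := by
  constructor
  · intro h
    by_contra hd
    have hub : ∀ n ∈ {n : ℕ | diLE X (lam : ℝ) ((c : ℝ) * lam) n},
        ((k + 1 : ℕ) : ℕ∞) ≤ (n : ℕ∞) := by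
      intro n hn
      by_contra hlt
      push_neg at hlt
      have hnk : n ≤ k := by exact_mod_cast Nat.lt_succ_iff.mp (by exact_mod_cast hlt)
      exact hd (diLE_mono hn le_rfl le_rfl hnk)
    have := le_iInf₂ hub
    rw [← fdim] at this
    have : ((k + 1 : ℕ) : ℕ∞) ≤ (k : ℕ∞) := this.trans h
    exact absurd (by exact_mod_cast this) (by omega)
  · intro h
    exact iInf₂_le k h

lemma ulim_le_of_mem {ω : Ultrafilter ℕ} {f : ℕ → ℕ∞} {v : ℕ}
    (h : {m | f m = (v : ℕ∞)} ∈ ω) : ulim ω f ≤ (v : ℕ∞) := by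
  have hex : ∃ v : ℕ, {m | f m = (v : ℕ∞)} ∈ ω := ⟨v, h⟩
  rw [ulim, dif_pos hex]
  have h2 := Classical.choose_spec hex
  have hint := (ω.toFilter.inter_mem h2 h)
  obtain ⟨m, hm1, hm2⟩ := Filter.nonempty_of_mem hint
  have : ((Classical.choose hex : ℕ) : ℕ∞) = (v : ℕ∞) := hm1.symm.trans hm2
  exact this.le

lemma exists_of_ulim_le {ω : Ultrafilter ℕ} {f : ℕ → ℕ∞} {k : ℕ}
    (h : ulim ω f ≤ (k : ℕ∞)) : ∃ v ≤ k, {m | f m = (v : ℕ∞)} ∈ ω := by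
  rw [ulim] at h
  split at h
  · rename_i hex
    exact ⟨Classical.choose hex, by exact_mod_cast h, Classical.choose_spec hex⟩
  · exact absurd h (by simp)

lemma exists_of_lasOmega_le {X : Type*} [PseudoMetricSpace X] {ω : Ultrafilter ℕ} {k : ℕ}
    (h : lasOmega X ω ≤ (k : ℕ∞)) :
    ∃ c : ℕ, {m : ℕ | diLE X (m : ℝ) ((c : ℝ) * m) k} ∈ ω := by
  have hc : ∃ c : ℕ, ulim ω (fun lam => fdim X c lam) ≤ (k : ℕ∞) := by
    by_contra hc
    push_neg at hc
    have : ((k + 1 : ℕ) : ℕ∞) ≤ lasOmega X ω := by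
      apply le_iInf
      intro c
      have h1 : (k : ℕ∞) < ulim ω (fun lam => fdim X c lam) := hc c
      have h2 : (k : ℕ∞) + 1 ≤ ulim ω (fun lam => fdim X c lam) := Order.add_one_le_of_lt h1
      simpa [Nat.cast_add] using h2
    have : ((k + 1 : ℕ) : ℕ∞) ≤ (k : ℕ∞) := this.trans h
    exact absurd (by exact_mod_cast this) (by omega)
  obtain ⟨c, hc⟩ := hc
  obtain ⟨v, hvk, hvm⟩ := exists_of_ulim_le hc
  refine ⟨c, Filter.mem_of_superset hvm ?_⟩
  intro m hm
  have : fdim X c m ≤ (k : ℕ∞) := by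
    rw [Set.mem_setOf_eq] at hm
    rw [hm]; exact_mod_cast hvk
  exact fdim_le_iff.mp this

lemma part1 {X : Type*} [PseudoMetricSpace X] {k : ℕ}
    (H : ∀ ω : Ultrafilter ℕ, (↑ω : Filter ℕ) ≤ Filter.cofinite → lasOmega X ω ≤ (k : ℕ∞)) :
    ANasLE X k := by
  have key : ∃ c : ℕ, {m : ℕ | diLE X (m : ℝ) ((c : ℝ) * m) k} ∈ (cofinite : Filter ℕ) := by
    by_contra hc
    push_neg at hc
    set T : ℕ → Set ℕ := fun c => {m | ¬ diLE X (m : ℝ) ((c : ℝ) * m) k} with hT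
    have hTinf : ∀ c, (T c).Infinite := by
      intro c
      have h1 := hc c
      rw [mem_cofinite] at h1
      have heq : T c = {m : ℕ | diLE X (m : ℝ) ((c : ℝ) * m) k}ᶜ := by
        ext m; simp [hT]
      rw [heq]
      exact h1
    have hTmono : ∀ c c' : ℕ, c ≤ c' → T c' ⊆ T c := by
      intro c c' hcc m hm hdi
      exact hm (diLE_mono hdi le_rfl
        (mul_le_mul_of_nonneg_right (by exact_mod_cast hcc) m.cast_nonneg) le_rfl)
    have hdir : Directed (· ≥ ·) (fun c => (𝓟 (T c) : Filter ℕ)) := by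
      intro c c'
      exact ⟨max c c', principal_mono.2 (hTmono _ _ (le_max_left _ _)),
        principal_mono.2 (hTmono _ _ (le_max_right _ _))⟩
    set F : Filter ℕ := cofinite ⊓ ⨅ c, 𝓟 (T c) with hF
    have hFne : F.NeBot := by
      rw [Filter.neBot_iff]
      intro hbot
      have hmem : (∅ : Set ℕ) ∈ F := by rw [hbot]; exact mem_bot
      rw [hF, Filter.mem_inf_iff] at hmem
      obtain ⟨s, hs, t, ht, hst⟩ := hmem
      rw [Filter.mem_iInf_of_directed hdir] at ht
      obtain ⟨c, htc⟩ := ht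
      rw [Filter.mem_principal] at htc
      have hsub : T c ⊆ sᶜ := by
        intro m hm hms
        have : m ∈ s ∩ t := ⟨hms, htc hm⟩
        rw [← hst] at this
        exact this
      rw [mem_cofinite] at hs
      exact (hTinf c) (hs.subset hsub)
    obtain ⟨ω, hω⟩ := Ultrafilter.exists_le F
    have hωcof : (↑ω : Filter ℕ) ≤ cofinite := hω.trans inf_le_left
    obtain ⟨c, hSc⟩ := exists_of_lasOmega_le (H ω hωcof)
    have hTc : T c ∈ ω := by
      apply hω
      have h1 : F ≤ 𝓟 (T c) := le_trans inf_le_right (iInf_le _ c)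
      exact h1 (Filter.mem_principal_self _)
    obtain ⟨m, hm1, hm2⟩ := Filter.nonempty_of_mem (ω.toFilter.inter_mem hSc hTc)
    exact hm2 hm1
  obtain ⟨c, hc⟩ := key
  rw [mem_cofinite] at hc
  obtain ⟨N, hN⟩ := hc.bddAbove
  rw [mem_upperBounds] at hN
  refine ⟨2 * ((c : ℝ) + 1), by positivity, max (N : ℝ) 1, ?_⟩
  intro lam hlam
  have hlam1 : (1 : ℝ) < lam := lt_of_le_of_lt (le_max_right _ _) hlam
  have hlam0 : (0 : ℝ) ≤ lam := by linarith
  set m := ⌈lam⌉₊ with hm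
  have hNm : (N : ℝ) < m := lt_of_le_of_lt (le_max_left _ _) (hlam.trans_le (Nat.le_ceil lam))
  have hdi : diLE X (m : ℝ) ((c : ℝ) * m) k := by
    by_contra hd
    have hmem : m ∈ {m : ℕ | diLE X (m : ℝ) ((c : ℝ) * m) k}ᶜ := hd
    have hmN : m ≤ N := hN m hmem
    exact absurd hNm (by exact_mod_cast Nat.not_lt.mpr hmN)
  apply diLE_mono hdi (Nat.le_ceil lam) ?_ le_rfl
  have hmle : (m : ℝ) ≤ lam + 1 := (Nat.ceil_lt_add_one hlam0).le
  have hc0 : (0 : ℝ) ≤ c := c.cast_nonneg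
  nlinarith [hc0, hlam1, hmle]

lemma lasOmega_le_of_ANasLE {X : Type*} [PseudoMetricSpace X] {n : ℕ} (h : ANasLE X n)
    {ω : Ultrafilter ℕ} (hω : (↑ω : Filter ℕ) ≤ Filter.cofinite) :
    lasOmega X ω ≤ (n : ℕ∞) := by
  obtain ⟨c, hc, r₀, hr⟩ := h
  set C : ℕ := ⌈c⌉₊ with hC
  have hdi : ∀ m : ℕ, r₀ < (m : ℝ) → fdim X C m ≤ (n : ℕ∞) := by
    intro m hm
    exact fdim_le_iff.2 (diLE_mono (hr m hm) le_rfl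
      (mul_le_mul_of_nonneg_right (Nat.le_ceil c) m.cast_nonneg) le_rfl)
  have hcof : {m : ℕ | r₀ < (m : ℝ)} ∈ ω := by
    apply hω
    rw [mem_cofinite]
    have h1 : {m : ℕ | r₀ < (m : ℝ)}ᶜ ⊆ Set.Iic ⌈r₀⌉₊ := by
      intro m hm
      have hm' : (m : ℝ) ≤ r₀ := by simpa using hm
      have : (m : ℝ) ≤ (⌈r₀⌉₊ : ℝ) := hm'.trans (Nat.le_ceil r₀)
      exact Set.mem_Iic.2 (by exact_mod_cast this)
    exact (Set.finite_Iic _).subset h1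
  have hunion : {m : ℕ | r₀ < (m : ℝ)} ⊆
      ⋃ v ∈ (Finset.range (n + 1) : Set ℕ), {m : ℕ | fdim X C m = (v : ℕ∞)} := by
    intro m hm
    obtain ⟨v, hv1, hv2⟩ := WithTop.le_coe_iff.mp (hdi m hm)
    refine Set.mem_biUnion ?_ hv1
    simpa [Finset.mem_range] using Nat.lt_succ_of_le hv2
  have hUmem : (⋃ v ∈ (Finset.range (n + 1) : Set ℕ),
      {m : ℕ | fdim X C m = (v : ℕ∞)}) ∈ ω := Filter.mem_of_superset hcof hunion
  obtain ⟨v, hv, hvm⟩ := (Ultrafilter.finite_biUnion_mem_iff (Finset.range (n + 1)).finite_toSet).mp hUmem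
  have hvn : v ≤ n := by
    have := Finset.mem_range.mp hv
    omega
  calc lasOmega X ω ≤ ulim ω (fun lam => fdim X C lam) := iInf_le _ C
    _ ≤ (v : ℕ∞) := ulim_le_of_mem hvm
    _ ≤ (n : ℕ∞) := by exact_mod_cast hvn

/-- if `las_ω X ≤ k` for every non-principal `ω` then `ANas X ≤ k`;
hence `ANas X = sup { las_ω X : ω ∈ ℕ* }`. -/
theorem stmt15 (X : Type*) [MetricSpace X] (k : ℕ) :
    ((∀ ω : Ultrafilter ℕ, (↑ω : Filter ℕ) ≤ Filter.cofinite → lasOmega X ω ≤ (k : ℕ∞)) →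
      ANasLE X k) ∧
    ANasDim X =
      ⨆ ω : {ω : Ultrafilter ℕ // (↑ω : Filter ℕ) ≤ Filter.cofinite}, lasOmega X ω.1 := by
  refine ⟨part1, ?_⟩
  apply le_antisymm
  · set S := ⨆ ω : {ω : Ultrafilter ℕ // (↑ω : Filter ℕ) ≤ Filter.cofinite}, lasOmega X ω.1
      with hSdef
    by_cases hS : S = ⊤
    · rw [hS]; exact le_top
    · have hk : ((S.toNat : ℕ) : ℕ∞) = S := ENat.coe_toNat hS
      have h1 : ANasLE X S.toNat := by
        apply part1
        intro ω hω
        have hle : lasOmega X ω ≤ S := le_iSup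
          (fun ω : {ω : Ultrafilter ℕ // (↑ω : Filter ℕ) ≤ Filter.cofinite} => lasOmega X ω.1)
          ⟨ω, hω⟩
        exact hle.trans hk.ge
      calc ANasDim X ≤ ((S.toNat : ℕ) : ℕ∞) := iInf₂_le _ h1
        _ = S := hk
  · apply iSup_le
    rintro ⟨ω, hω⟩
    exact le_iInf₂ (fun n hn => lasOmega_le_of_ANasLE hn hω)
end
end
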